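/- arXiv:2403.08102 — 6 statements merged into one kernel-verified Lean document; each statement's English description precedes it below -/
import Mathlib

section
/- For every integer N ≥ 2, there exists v̂ in the open interval (1/2, (N+1)/(2N)) such that A_N(v̂) = B_N(v̂), where A_N(v) = v^{N+1} · 2N/(N+1)^2 and B_N(v) = (v - 1/2) · P_N(v) with P_N(v) = (1/N) Σ_{j=0}^{N-1} v^j. -/
theorem exists_cutoff (N : ℕ) (hN : 2 ≤ N)
    (A : ℝ → ℝ) (hA : ∀ v, A v = v ^ (N + 1) * (2 * N) / (N + 1) ^ 2)
    (P : ℝ → ℝ) (hP : ∀ v, P v = (1 / N) * ∑ j ∈ Finset.range N, v ^ j)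
    (B : ℝ → ℝ) (hB : ∀ v, B v = (v - 1 / 2) * P v) :
    ∃ v ∈ Set.Ioo (1 / 2 : ℝ) ((N + 1) / (2 * N)), A v = B v := by
  have hN2 : (2:ℝ) ≤ (N:ℝ) := by exact_mod_cast hN
  have hNpos : (0:ℝ) < (N:ℝ) := by linarith
  set c : ℝ := ((N:ℝ) + 1) / (2 * N) with hc
  have hhalf : (1/2 : ℝ) < c := by
    rw [hc, lt_div_iff₀ (by positivity)]; ring_nf; linarith
  have hc1 : c < 1 := by
    rw [hc, div_lt_one (by positivity)]; linarith
  have hcpos : 0 < c := by linarith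
  set f : ℝ → ℝ := fun v =>
    (v - 1/2) * ((1/(N:ℝ)) * ∑ j ∈ Finset.range N, v ^ j)
      - v ^ (N + 1) * (2 * (N:ℝ)) / ((N:ℝ) + 1) ^ 2 with hf
  have hcont : ContinuousOn f (Set.Icc (1/2 : ℝ) c) := by
    apply Continuous.continuousOn
    fun_prop
  have hfa : f (1/2) < 0 := by
    have h1 : ((1:ℝ)/2 - 1/2) = 0 := by norm_num
    have h2 : (0:ℝ) < (1/2:ℝ) ^ (N + 1) * (2 * (N:ℝ)) / ((N:ℝ) + 1) ^ 2 := by positivity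
    simp only [hf, h1, zero_mul, zero_sub]
    linarith
  have hsum : (N:ℝ) * c ^ (N - 1) < ∑ j ∈ Finset.range N, c ^ j := by
    have h1 : ∑ j ∈ Finset.range N, c ^ (N - 1) < ∑ j ∈ Finset.range N, c ^ j := by
      apply Finset.sum_lt_sum
      · intro j hj
        exact pow_le_pow_of_le_one (le_of_lt hcpos) (le_of_lt hc1)
          (Nat.le_pred_of_lt (Finset.mem_range.mp hj))
      · refine ⟨0, Finset.mem_range.mpr (by omega), ?_⟩
        simpa using pow_lt_one₀ (le_of_lt hcpos) hc1 (by omega)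
    simpa [Finset.sum_const, Finset.card_range, nsmul_eq_mul] using h1
  have hcpow : c ^ (N + 1) = c ^ (N - 1) * c ^ 2 := by
    have : N + 1 = (N - 1) + 2 := by omega
    rw [this, pow_add]
  have hc2 : c ^ 2 = ((N:ℝ) + 1) ^ 2 / (2 * N) ^ 2 := by
    rw [hc, div_pow]
  have hAc : c ^ (N + 1) * (2 * (N:ℝ)) / ((N:ℝ) + 1) ^ 2 = c ^ (N - 1) / (2 * N) := by
    rw [hcpow, hc2]
    field_simp
  have hcm : c - 1/2 = 1 / (2 * (N:ℝ)) := by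
    rw [hc]; field_simp; ring
  have hfb : 0 < f c := by
    simp only [hf, hAc, hcm]
    set S : ℝ := ∑ j ∈ Finset.range N, c ^ j with hS
    set d : ℝ := c ^ (N - 1) with hd
    have hsum' : (N:ℝ) * d < S := hsum
    have hmul := mul_lt_mul_of_pos_right hsum'
      (show (0:ℝ) < 1 / (2 * (N:ℝ)^2) by positivity)
    have e1 : 1 / (2 * (N:ℝ)) * (1/(N:ℝ) * S) = S * (1 / (2 * (N:ℝ)^2)) := by
      field_simp
    have e2 : d / (2 * (N:ℝ)) = (N:ℝ) * d * (1 / (2 * (N:ℝ)^2)) := by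
      field_simp
    rw [e1, e2]
    linarith
  have hsub : Set.Ioo (f (1/2)) (f c) ⊆ f '' Set.Ioo (1/2) c :=
    intermediate_value_Ioo (le_of_lt hhalf) hcont
  obtain ⟨v, hv, hfv⟩ := hsub ⟨hfa, hfb⟩
  refine ⟨v, hv, ?_⟩
  rw [hA, hB, hP]
  simp only [hf] at hfv
  linarith
end

section
/- Fix N ≥ 2 and v̂ ∈ (1/2, 1). The function b ↦ ((N+1)/(2N) · b)^{N-1} · b · (v - b/2), for fixed v ∈ [0, v̂], attains its maximum over b ∈ [0, 2N/(N+1)·v̂] at b = 2N/(N+1)·v, with maximal value A_N(v) = v^{N+1}·2N/(N+1)^2. -/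
lemma key_amgm (n : ℕ) (t v : ℝ) (ht : 0 ≤ t) (hv : 0 ≤ v) :
    ((n : ℝ) + 1) * (t ^ n * v) ≤ v ^ (n + 1) + (n : ℝ) * t ^ (n + 1) := by
  induction n with
  | zero => simp
  | succ n ih =>
    have h1' : ((n:ℝ) + 1) * (t ^ (n + 1) * v) ≤ v ^ (n + 1) * t + (n:ℝ) * (t ^ (n + 1) * t) := by
      calc ((n:ℝ) + 1) * (t ^ (n + 1) * v) = ((n:ℝ) + 1) * (t ^ n * v) * t := by
            rw [pow_succ]; ring
        _ ≤ (v ^ (n + 1) + (n:ℝ) * t ^ (n + 1)) * t := mul_le_mul_of_nonneg_right ih ht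
        _ = v ^ (n + 1) * t + (n:ℝ) * (t ^ (n + 1) * t) := by ring
    have h2exp : 0 ≤ v ^ (n + 1) * v + t ^ (n + 1) * t - v * t ^ (n + 1) - t * v ^ (n + 1) := by
      rcases le_total t v with h | h
      · have hp := pow_le_pow_left₀ ht h (n + 1)
        nlinarith [mul_nonneg (sub_nonneg.2 h) (sub_nonneg.2 hp)]
      · have hp := pow_le_pow_left₀ hv h (n + 1)
        nlinarith [mul_nonneg (sub_nonneg.2 h) (sub_nonneg.2 hp)]
    push_cast
    rw [pow_succ v (n + 1), pow_succ t (n + 1)]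
    linarith [h1', h2exp]

lemma aux_bound (n : ℕ) (t v : ℝ) (ht : 0 ≤ t) (hv : 0 ≤ v) :
    t ^ (n + 1) * (2 * ((n:ℝ) + 2) / ((n:ℝ) + 2 + 1) * t) *
        (v - 2 * ((n:ℝ) + 2) / ((n:ℝ) + 2 + 1) * t / 2)
      ≤ v ^ (n + 3) * (2 * ((n:ℝ) + 2)) / ((n:ℝ) + 2 + 1) ^ 2 := by
  have hm1 : (0:ℝ) < (n:ℝ) + 2 + 1 := by positivity
  have hkey := key_amgm (n + 2) t v ht hv
  push_cast at hkey
  calc t ^ (n + 1) * (2 * ((n:ℝ) + 2) / ((n:ℝ) + 2 + 1) * t) *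
        (v - 2 * ((n:ℝ) + 2) / ((n:ℝ) + 2 + 1) * t / 2)
      = 2 * ((n:ℝ) + 2) / ((n:ℝ) + 2 + 1) ^ 2 *
          (((n:ℝ) + 2 + 1) * (t ^ (n + 2) * v) - ((n:ℝ) + 2) * t ^ (n + 3)) := by
        field_simp
        ring
    _ ≤ 2 * ((n:ℝ) + 2) / ((n:ℝ) + 2 + 1) ^ 2 * v ^ (n + 3) := by
        apply mul_le_mul_of_nonneg_left _ (by positivity)
        have : (n:ℝ) + 2 + 1 = (n:ℝ) + 3 := by ring
        rw [this]
        have e3 : t ^ (n + 2 + 1) = t ^ (n + 3) := by norm_num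
        rw [e3] at hkey
        linarith
    _ = v ^ (n + 3) * (2 * ((n:ℝ) + 2)) / ((n:ℝ) + 2 + 1) ^ 2 := by ring

theorem interior_foc (N : ℕ) (hN : 2 ≤ N) (vhat : ℝ) (hvhat : vhat ∈ Set.Ioo (1/2 : ℝ) 1)
    (v : ℝ) (hv : v ∈ Set.Icc (0 : ℝ) vhat)
    (π : ℝ → ℝ)
    (hπ : ∀ b, π b = ((N + 1) / (2 * N) * b) ^ (N - 1) * b * (v - b / 2)) :
    (2 * N / (N + 1) * v ∈ Set.Icc (0 : ℝ) (2 * N / (N + 1) * vhat)) ∧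
      (∀ b ∈ Set.Icc (0 : ℝ) (2 * N / (N + 1) * vhat), π b ≤ π (2 * N / (N + 1) * v)) ∧
      π (2 * N / (N + 1) * v) = v ^ (N + 1) * (2 * N) / (N + 1) ^ 2 := by
  obtain ⟨n, rfl⟩ : ∃ n, N = n + 2 := ⟨N - 2, by omega⟩
  obtain ⟨hv0, hvhat'⟩ := hv
  obtain ⟨hvhat1, hvhat2⟩ := hvhat
  push_cast at hπ ⊢
  have hm0 : (0:ℝ) < (n:ℝ) + 2 := by positivity
  have hm1 : (0:ℝ) < (n:ℝ) + 2 + 1 := by positivity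
  have hcancel : ∀ t : ℝ, ((n:ℝ) + 2 + 1) / (2 * ((n:ℝ) + 2)) *
      (2 * ((n:ℝ) + 2) / ((n:ℝ) + 2 + 1) * t) = t := by
    intro t; field_simp
  -- value at the maximizer
  have hval : π (2 * ((n:ℝ) + 2) / ((n:ℝ) + 2 + 1) * v)
      = v ^ (n + 2 + 1) * (2 * ((n:ℝ) + 2)) / ((n:ℝ) + 2 + 1) ^ 2 := by
    rw [hπ, hcancel]
    show v ^ (n + 1) * _ * _ = _
    field_simp
    ring
  refine ⟨⟨by positivity, mul_le_mul_of_nonneg_left hvhat' (by positivity)⟩, ?_, hval⟩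
  intro b hb
  obtain ⟨hb0, hb1⟩ := hb
  rw [hval, hπ b]
  have ht0 : 0 ≤ ((n:ℝ) + 2 + 1) / (2 * ((n:ℝ) + 2)) * b := by positivity
  have hbt : b = 2 * ((n:ℝ) + 2) / ((n:ℝ) + 2 + 1) *
      (((n:ℝ) + 2 + 1) / (2 * ((n:ℝ) + 2)) * b) := by field_simp
  conv_lhs => rw [hbt, hcancel]
  exact aux_bound n (((n:ℝ) + 2 + 1) / (2 * ((n:ℝ) + 2)) * b) v ht0 hv0
end

section
/- Fix N ≥ 2 and let v̂_N ∈ (1/2, (N+1)/(2N)) satisfy A_N(v̂_N) = (v̂_N - 1/2)·P_N(v̂_N), where A_N(v) = v^{N+1}·2N/(N+1)^2 and P_N(v) = (1/N)Σ_{j=0}^{N-1} v^j. Then for all v ∈ [0, v̂_N), A_N(v) > P_N(v̂_N)·(v - 1/2). -/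
theorem interior_payoff_beats_cap (N : ℕ) (hN : 2 ≤ N)
    (A : ℝ → ℝ) (hA : ∀ v, A v = v ^ (N + 1) * (2 * N) / (N + 1) ^ 2)
    (P : ℝ → ℝ) (hP : ∀ v, P v = (1 / N) * ∑ j ∈ Finset.range N, v ^ j)
    (vhat : ℝ) (hvhat : vhat ∈ Set.Ioo (1/2 : ℝ) ((N + 1) / (2 * N)))
    (heq : A vhat = (vhat - 1 / 2) * P vhat) :
    ∀ v ∈ Set.Ico (0 : ℝ) vhat, A v > P vhat * (v - 1 / 2) := by
  obtain ⟨hv1, hv2⟩ := hvhat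
  intro v hv
  obtain ⟨hv0, hvlt⟩ := hv
  have hNr : (2:ℝ) ≤ (N:ℝ) := by exact_mod_cast hN
  have hN0 : (0:ℝ) < N := by linarith
  have hN1 : (0:ℝ) < (N:ℝ) + 1 := by linarith
  have hvhat0 : 0 < vhat := lt_trans (by norm_num) hv1
  have hvhat1 : vhat < 1 := by
    have h : ((N:ℝ) + 1) / (2*N) ≤ 1 := by
      rw [div_le_one (by linarith)]; linarith
    linarith
  have hkey : vhat * (2*N) < (N:ℝ) + 1 := by
    have := (lt_div_iff₀ (by linarith : (0:ℝ) < 2*N)).mp hv2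
    linarith
  have hvv : v ≤ vhat := le_of_lt hvlt
  -- geometric sum factorization
  have hgs := geom_sum₂_mul vhat v (N+1)
  simp only [Nat.add_sub_cancel] at hgs
  set S := ∑ i ∈ Finset.range (N+1), vhat ^ i * v ^ (N - i) with hS
  have hSle : S ≤ ((N:ℝ) + 1) * vhat ^ N := by
    have h : S ≤ (Finset.range (N+1)).card • vhat ^ N := by
      apply Finset.sum_le_card_nsmul
      intro i hi
      have hiN : i ≤ N := Nat.lt_succ_iff.mp (Finset.mem_range.mp hi)
      calc vhat ^ i * v ^ (N - i)
          ≤ vhat ^ i * vhat ^ (N - i) := by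
            apply mul_le_mul_of_nonneg_left (pow_le_pow_left₀ hv0 hvv _) (by positivity)
        _ = vhat ^ N := by rw [← pow_add]; congr 1; omega
    simpa [Finset.card_range, nsmul_eq_mul] using h
  have hPge : vhat ^ (N - 1) ≤ P vhat := by
    have hsum : (N:ℝ) * vhat ^ (N-1) ≤ ∑ j ∈ Finset.range N, vhat ^ j := by
      have h : (Finset.range N).card • vhat ^ (N-1) ≤ ∑ j ∈ Finset.range N, vhat ^ j := by
        apply Finset.card_nsmul_le_sum
        intro j hj
        exact pow_le_pow_of_le_one hvhat0.le hvhat1.le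
          (by have := Finset.mem_range.mp hj; omega)
      simpa [Finset.card_range, nsmul_eq_mul] using h
    rw [hP]
    have h := mul_le_mul_of_nonneg_left hsum (le_of_lt (one_div_pos.mpr hN0))
    calc vhat ^ (N-1) = (1/(N:ℝ)) * ((N:ℝ) * vhat ^ (N-1)) := by field_simp
      _ ≤ _ := h
  have hdiff : A vhat - A v = S * (vhat - v) * (2*N) / ((N:ℝ)+1)^2 := by
    rw [hA, hA]
    push_cast
    linear_combination (-(2*(N:ℝ)) / ((N:ℝ)+1)^2) * hgs
  have h1 : A vhat - A v ≤ (vhat - v) * (vhat ^ N * (2*N) / ((N:ℝ)+1)) := by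
    rw [hdiff]
    have hrw : (vhat - v) * (vhat ^ N * (2*N) / ((N:ℝ)+1))
        = (((N:ℝ)+1) * vhat ^ N) * (vhat - v) * (2*N) / ((N:ℝ)+1)^2 := by
      field_simp
    rw [hrw]
    gcongr
  have hpowN : vhat ^ N = vhat ^ (N-1) * vhat := by
    rw [← pow_succ]; congr 1; omega
  have hp0 : 0 < vhat ^ (N-1) := pow_pos hvhat0 _
  have h3 : vhat ^ N * (2*N) / ((N:ℝ)+1) < vhat ^ (N-1) := by
    rw [hpowN, div_lt_iff₀ hN1]
    nlinarith [mul_lt_mul_of_pos_left hkey hp0]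
  have hle2 : (vhat - v) * (vhat ^ N * (2*N) / ((N:ℝ)+1)) < (vhat - v) * vhat ^ (N-1) :=
    mul_lt_mul_of_pos_left h3 (by linarith)
  have hle3 : (vhat - v) * vhat ^ (N-1) ≤ (vhat - v) * P vhat :=
    mul_le_mul_of_nonneg_left hPge (by linarith)
  have hA_ineq : A vhat - A v < (vhat - v) * P vhat := by linarith
  nlinarith [heq, hA_ineq]
end

section
/- Fix N ≥ 2 and v̂_N ∈ (1/2, (N+1)/(2N)) with A_N(v̂_N) = (v̂_N - 1/2)P_N(v̂_N). Define Â_N(v) = (2N/(N+1))·v̂_N^N·(v - (N/(N+1))v̂_N) for v ∈ (v̂_N, (2N/(N+1))v̂_N] and Â_N(v) = v̂_N^{N-1}·v²/2 for v ∈ ((2N/(N+1))v̂_N, 1]. Then Â_N is continuously differentiable on (v̂_N, 1], Â_N(v̂_N⁺) limits to A_N(v̂_N), and P_N(v̂_N) > Â_N'(v) for all v ∈ (v̂_N, 1]; consequently P_N(v̂_N)(v - 1/2) > Â_N(v) for all v ∈ (v̂_N, 1]. -/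
open Set Filter

theorem cap_bid_optimal_above_cutoff (N : ℕ) (hN : 2 ≤ N)
    (A : ℝ → ℝ) (hA : ∀ v, A v = v ^ (N + 1) * (2 * N) / (N + 1) ^ 2)
    (P : ℝ → ℝ) (hP : ∀ v, P v = (1 / N) * ∑ j ∈ Finset.range N, v ^ j)
    (vhat : ℝ) (hvhat : vhat ∈ Set.Ioo (1/2 : ℝ) ((N + 1) / (2 * N)))
    (heq : A vhat = (vhat - 1 / 2) * P vhat)
    (Ahat : ℝ → ℝ)
    (hAhat : ∀ v, Ahat v =
      if v ≤ 2 * N / (N + 1) * vhat then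
        (2 * N / (N + 1)) * vhat ^ N * (v - (N / (N + 1)) * vhat)
      else vhat ^ (N - 1) * v ^ 2 / 2) :
    (∃ A' : ℝ → ℝ, ContinuousOn A' (Set.Ioc vhat 1) ∧
        (∀ v ∈ Set.Ioc vhat 1, HasDerivWithinAt Ahat (A' v) (Set.Ioc vhat 1) v) ∧
        (∀ v ∈ Set.Ioc vhat 1, P vhat > A' v)) ∧
      Tendsto Ahat (nhdsWithin vhat (Set.Ioi vhat)) (nhds (A vhat)) ∧
      (∀ v ∈ Set.Ioc vhat 1, P vhat * (v - 1 / 2) > Ahat v) := by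
  obtain ⟨hv_half, hv_ub⟩ := hvhat
  have hn : (2:ℝ) ≤ (N:ℝ) := by exact_mod_cast hN
  have hN1 : (0:ℝ) < (N:ℝ) + 1 := by linarith
  have hv0 : 0 < vhat := by linarith
  have hub3 : ((N:ℝ) + 1) / (2 * N) ≤ 3/4 := by
    rw [div_le_iff₀ (by linarith)]; linarith
  have hv1 : vhat < 1 := by linarith
  set c : ℝ := 2 * (N:ℝ) / ((N:ℝ) + 1) * vhat with hc_def
  set q : ℝ := vhat ^ (N - 1) with hq_def
  set m : ℝ := 2 * (N:ℝ) / ((N:ℝ) + 1) * vhat ^ N with hm_def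
  set b : ℝ := (N:ℝ) / ((N:ℝ) + 1) * vhat with hb_def
  have hpowN : vhat ^ N = vhat ^ (N - 1) * vhat := by
    conv_lhs => rw [show N = (N - 1) + 1 by omega]
    rw [pow_succ]
  have hpowN1 : vhat ^ (N + 1) = vhat ^ N * vhat := pow_succ _ _
  have hq0 : 0 < q := pow_pos hv0 _
  have hc_gt : vhat < c := by
    have h1 : (1:ℝ) < 2 * (N:ℝ) / ((N:ℝ) + 1) := by
      rw [lt_div_iff₀ hN1]; linarith
    rw [hc_def]
    nlinarith [mul_lt_mul_of_pos_right h1 hv0]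
  have hc1 : c < 1 := by
    have h2 : 2 * (N:ℝ) / ((N:ℝ) + 1) * vhat <
        2 * (N:ℝ) / ((N:ℝ) + 1) * (((N:ℝ) + 1) / (2 * N)) := by
      apply mul_lt_mul_of_pos_left hv_ub
      positivity
    have h3 : 2 * (N:ℝ) / ((N:ℝ) + 1) * (((N:ℝ) + 1) / (2 * N)) = 1 := by
      field_simp
    rw [hc_def]; linarith
  have hmqc : m = q * c := by rw [hm_def, hq_def, hc_def, hpowN]; ring
  have hb2 : b = c / 2 := by rw [hb_def, hc_def]; ring
  have hAv : m * (vhat - b) = A vhat := by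
    rw [hA, hm_def, hb_def, hpowN1]
    field_simp
    ring
  have hfc : m * (c - b) = q * c ^ 2 / 2 := by rw [hmqc, hb2]; ring
  -- P vhat > q
  have hP' : q < P vhat := by
    rw [hP]
    have hsum : ∑ _j ∈ Finset.range N, vhat ^ (N - 1) < ∑ j ∈ Finset.range N, vhat ^ j := by
      apply Finset.sum_lt_sum
      · intro i hi
        have hi' := Finset.mem_range.mp hi
        exact pow_le_pow_of_le_one hv0.le hv1.le (by omega)
      · refine ⟨0, Finset.mem_range.mpr (by omega), ?_⟩
        simpa using pow_lt_one₀ hv0.le hv1 (by omega)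
    have hcst : ∑ _j ∈ Finset.range N, vhat ^ (N - 1) = (N:ℝ) * vhat ^ (N - 1) := by
      simp [Finset.sum_const, nsmul_eq_mul]
    have h2 : (1 / (N:ℝ)) * ((N:ℝ) * q) < (1 / (N:ℝ)) * ∑ j ∈ Finset.range N, vhat ^ j := by
      apply mul_lt_mul_of_pos_left _ (by positivity)
      rw [hq_def]
      rw [← hcst]; exact hsum
    have h3 : (1 / (N:ℝ)) * ((N:ℝ) * q) = q := by field_simp
    linarith
  have hPm : m < P vhat := by
    have : q * c < q * 1 := mul_lt_mul_of_pos_left hc1 hq0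
    rw [hmqc]; linarith
  have hEq0 : P vhat * (vhat - 1/2) = m * (vhat - b) := by rw [hAv, heq]; ring
  -- derivative helpers
  have hd1 : ∀ x : ℝ, HasDerivAt (fun y : ℝ => m * (y - b)) m x := by
    intro x
    simpa using ((hasDerivAt_id x).sub_const b).const_mul m
  have hd2 : ∀ x : ℝ, HasDerivAt (fun y : ℝ => q * y ^ 2 / 2) (q * x) x := by
    intro x
    have h := ((hasDerivAt_pow 2 x).const_mul q).div_const 2
    refine h.congr_deriv ?_
    push_cast
    ring
  refine ⟨⟨fun v => q * max v c, ?_, ?_, ?_⟩, ?_, ?_⟩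
  · exact (continuous_const.mul (continuous_id.max continuous_const)).continuousOn
  · rintro v ⟨hv_lo, hv_hi⟩
    show HasDerivWithinAt Ahat (q * max v c) (Ioc vhat 1) v
    rcases lt_trichotomy v c with h | h | h
    · rw [max_eq_right h.le, ← hmqc]
      apply ((hd1 v).hasDerivWithinAt).congr_of_eventuallyEq
      · filter_upwards [nhdsWithin_le_nhds (Iio_mem_nhds h)] with x hx
        rw [hAhat x, if_pos hx.le]
      · rw [hAhat v, if_pos h.le]
    · rw [h, max_self, ← hmqc]
      have hIic : HasDerivWithinAt Ahat m (Iic c) c :=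
        ((hd1 c).hasDerivWithinAt).congr
          (fun x hx => by rw [hAhat x, if_pos (Set.mem_Iic.mp hx)])
          (by rw [hAhat c, if_pos le_rfl])
      have hIci : HasDerivWithinAt Ahat m (Ici c) c := by
        have h2 := (hd2 c).hasDerivWithinAt (s := Ici c)
        rw [hmqc]
        refine h2.congr (fun x hx => ?_) ?_
        · rcases eq_or_lt_of_le (Set.mem_Ici.mp hx) with heqx | hlt
          · rw [← heqx, hAhat c, if_pos le_rfl]
            exact hfc
          · rw [hAhat x, if_neg (not_le.mpr hlt)]
        · rw [hAhat c, if_pos le_rfl]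
          exact hfc
      have hu := hIic.union hIci
      rw [Iic_union_Ici] at hu
      exact (hasDerivWithinAt_univ.mp hu).hasDerivWithinAt
    · rw [max_eq_left h.le]
      apply ((hd2 v).hasDerivWithinAt).congr_of_eventuallyEq
      · filter_upwards [nhdsWithin_le_nhds (Ioi_mem_nhds h)] with x hx
        rw [hAhat x, if_neg (not_le.mpr hx)]
      · rw [hAhat v, if_neg (not_le.mpr h)]
  · rintro v ⟨hv_lo, hv_hi⟩
    have hmax : max v c ≤ 1 := max_le hv_hi hc1.le
    have : q * max v c ≤ q * 1 := mul_le_mul_of_nonneg_left hmax hq0.le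
    show q * max v c < P vhat
    linarith
  · have hcont : Tendsto (fun v : ℝ => m * (v - b)) (nhdsWithin vhat (Set.Ioi vhat))
        (nhds (m * (vhat - b))) :=
      (((continuous_const.mul (continuous_id.sub continuous_const)).tendsto vhat)).mono_left
        nhdsWithin_le_nhds
    rw [hAv] at hcont
    refine Tendsto.congr' ?_ hcont
    filter_upwards [nhdsWithin_le_nhds (Iio_mem_nhds hc_gt)] with x hx
    rw [hAhat x, if_pos hx.le]
  · rintro v ⟨hv_lo, hv_hi⟩
    rw [hAhat v]
    split_ifs with hvc
    · nlinarith [mul_pos (sub_pos.mpr hPm) (sub_pos.mpr hv_lo)]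
    · push_neg at hvc
      have hgc : P vhat * (c - 1/2) - q * c ^ 2 / 2 = (P vhat - m) * (c - vhat) := by
        linear_combination hEq0 + hfc
      have hpos2 : (0:ℝ) < P vhat - q * ((v + c) / 2) := by nlinarith
      have key2 : P vhat * (v - 1/2) - q * v ^ 2 / 2 =
          (P vhat * (c - 1/2) - q * c ^ 2 / 2) + (v - c) * (P vhat - q * ((v + c) / 2)) := by
        ring
      have h5 : (0:ℝ) < (P vhat - m) * (c - vhat) :=
        mul_pos (sub_pos.mpr hPm) (sub_pos.mpr hc_gt)
      have h6 : (0:ℝ) < (v - c) * (P vhat - q * ((v + c) / 2)) :=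
        mul_pos (sub_pos.mpr hvc) hpos2
      linarith
end

section
/- Fix N ≥ 2 and w̄ > 2. For fixed v ∈ [0,1], the function b ↦ ((N+1)/(2N)·b)^{N-1} · (b/w̄) · (v - b/2), defined for b ∈ [0, 2N/(N+1)], attains its maximum at b = 2N/(N+1)·v, and this b also maximizes the full payoff π(b) that equals the above for b ≤ 2N/(N+1), equals (b/w̄)(v - b/2) for b ∈ (2N/(N+1), w̄], and equals v - w̄/2 for b > w̄. -/
lemma helper_pow (N : ℕ) (s : ℝ) (hs : 0 ≤ s) :
    s ^ N * ((N + 1) - N * s) ≤ 1 := by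
  cases N with
  | zero => simp
  | succ M =>
    by_cases h : ((M + 1 : ℕ) + 1 : ℝ) - (M + 1 : ℕ) * s ≤ 0
    · exact le_trans (mul_nonpos_of_nonneg_of_nonpos (pow_nonneg hs _) h) zero_le_one
    · push_neg at h
      push_cast at h ⊢
      have hM : (0:ℝ) < (M:ℝ) + 1 := by positivity
      have hs2 : s < 2 := by nlinarith
      set x : ℝ := s - 1 with hx
      have hb : 1 + (M + 1 : ℕ) * (-x) ≤ (1 + (-x)) ^ (M + 1) := by
        apply one_add_mul_le_pow
        simp only [hx]; linarith
      push_cast at hb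
      have h1 : ((M:ℝ) + 1 + 1) - ((M:ℝ)+1) * s = 1 + ((M:ℝ)+1) * (-x) := by
        simp only [hx]; ring
      have h2 : s ^ (M+1) * (((M:ℝ)+1+1) - ((M:ℝ)+1) * s) ≤ s ^ (M+1) * (1 + (-x)) ^ (M+1) := by
        rw [h1]
        exact mul_le_mul_of_nonneg_left hb (pow_nonneg hs _)
      calc s ^ (M+1) * (((M:ℝ)+1+1) - ((M:ℝ)+1) * s) ≤ s ^ (M+1) * (1 + (-x)) ^ (M+1) := h2
        _ = (s * (2 - s)) ^ (M+1) := by rw [← mul_pow, hx]; ring_nf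
        _ ≤ 1 := by
            apply pow_le_one₀
            · nlinarith
            · nlinarith [sq_nonneg (s - 1)]

lemma key_ineq (N : ℕ) (t v : ℝ) (ht : 0 ≤ t) (hv : 0 ≤ v) :
    t ^ N * ((N + 1) * v - N * t) ≤ v ^ (N + 1) := by
  rcases eq_or_lt_of_le hv with h | h
  · rw [← h]
    have : t ^ N * ((N + 1) * 0 - N * t) ≤ 0 := by
      apply mul_nonpos_of_nonneg_of_nonpos (pow_nonneg ht _)
      have : (0:ℝ) ≤ (N:ℝ) * t := by positivity
      linarith
    calc t ^ N * ((N + 1) * 0 - N * t) ≤ 0 := this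
      _ ≤ 0 ^ (N + 1) := by rw [zero_pow (Nat.succ_ne_zero N)]
  · have hv' : v ≠ 0 := ne_of_gt h
    have H := helper_pow N (t / v) (div_nonneg ht hv)
    have heq : t ^ N * ((N + 1) * v - N * t)
        = v ^ (N + 1) * ((t/v) ^ N * ((N + 1) - N * (t/v))) := by
      rw [div_pow]
      field_simp
      ring
    rw [heq]
    calc v ^ (N + 1) * ((t/v) ^ N * ((N + 1) - N * (t/v))) ≤ v ^ (N+1) * 1 :=
          mul_le_mul_of_nonneg_left H (by positivity)
      _ = v ^ (N+1) := mul_one _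

theorem asymmetric_foc (N : ℕ) (hN : 2 ≤ N) (wbar : ℝ) (hwbar : 2 < wbar)
    (v : ℝ) (hv : v ∈ Set.Icc (0 : ℝ) 1)
    (π : ℝ → ℝ)
    (hπ : ∀ b, π b =
      if b ≤ 2 * N / (N + 1) then ((N + 1) / (2 * N) * b) ^ (N - 1) * (b / wbar) * (v - b / 2)
      else if b ≤ wbar then (b / wbar) * (v - b / 2)
      else v - wbar / 2) :
    (∀ b ∈ Set.Icc (0 : ℝ) (2 * N / (N + 1)),
        ((N + 1) / (2 * N) * b) ^ (N - 1) * (b / wbar) * (v - b / 2) ≤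
          π (2 * N / (N + 1) * v)) ∧
      ∀ b : ℝ, 0 ≤ b → π b ≤ π (2 * N / (N + 1) * v) := by
  obtain ⟨hv0, hv1⟩ := hv
  obtain ⟨M, rfl⟩ : ∃ M, N = M + 2 := ⟨N - 2, by omega⟩
  push_cast at hπ ⊢
  try simp only [show M + 2 - 1 = M + 1 from rfl] at hπ ⊢
  have hm0 : (0:ℝ) ≤ (M:ℝ) := Nat.cast_nonneg M
  have hw0 : (0:ℝ) < wbar := by linarith
  have hn0 : (0:ℝ) < (M:ℝ) + 2 := by linarith
  have hn1 : (0:ℝ) < (M:ℝ) + 2 + 1 := by linarith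
  set C : ℝ := 2 * ((M:ℝ) + 2) / ((M:ℝ) + 2 + 1) with hC
  have hC0 : 0 < C := by rw [hC]; positivity
  have hC1 : 1 < C := by rw [hC, lt_div_iff₀ hn1]; linarith
  have hC2 : C < 2 := by rw [hC, div_lt_iff₀ hn1]; linarith
  have hinv : ((M:ℝ) + 2 + 1) / (2 * ((M:ℝ) + 2)) * C = 1 := by
    rw [hC]; field_simp
  set K : ℝ := C / (wbar * ((M:ℝ) + 3)) with hK
  have hK0 : 0 ≤ K := by rw [hK]; positivity
  have hCv_le : C * v ≤ C := mul_le_of_le_one_right hC0.le hv1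
  have hπCv : π (C * v) = K * v ^ (M + 3) := by
    rw [hπ, if_pos hCv_le, ← mul_assoc, hinv, one_mul, hK, hC]
    field_simp
    ring
  have partA : ∀ b ∈ Set.Icc (0:ℝ) C,
      (((M:ℝ) + 2 + 1) / (2 * ((M:ℝ) + 2)) * b) ^ (M + 1) * (b / wbar) * (v - b / 2)
        ≤ π (C * v) := by
    rintro b ⟨hb0, hbC⟩
    set t : ℝ := ((M:ℝ) + 2 + 1) / (2 * ((M:ℝ) + 2)) * b with ht
    have ht0 : 0 ≤ t := by rw [ht]; positivity
    have hkey := key_ineq (M + 2) t v ht0 hv0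
    push_cast at hkey
    have hb : b = 2 * ((M:ℝ) + 2) / ((M:ℝ) + 2 + 1) * t := by
      rw [ht]; field_simp
    have heq : t ^ (M + 1) * (b / wbar) * (v - b / 2)
        = K * (t ^ (M + 2) * (((M:ℝ) + 2 + 1) * v - ((M:ℝ) + 2) * t)) := by
      rw [hb, hK, hC, pow_succ]
      field_simp
      ring
    rw [heq, hπCv]
    have : t ^ (M + 2) * (((M:ℝ) + 2 + 1) * v - ((M:ℝ) + 2) * t) ≤ v ^ (M + 3) := by
      convert hkey using 2 <;> ring
    calc K * (t ^ (M + 2) * (((M:ℝ) + 2 + 1) * v - ((M:ℝ) + 2) * t))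
        ≤ K * v ^ (M + 3) := mul_le_mul_of_nonneg_left this hK0
      _ = K * v ^ (M + 3) := rfl
  refine ⟨partA, ?_⟩
  intro b hb0
  rcases le_or_gt b C with h | h
  · rw [hπ, if_pos h]
    exact partA b ⟨hb0, h⟩
  · rcases le_or_gt b wbar with h2 | h2
    · rw [hπ b, if_neg (not_le.mpr h), if_pos h2]
      have hCA := partA C ⟨hC0.le, le_refl C⟩
      rw [hinv, one_pow, one_mul] at hCA
      have hq : b * (v - b / 2) ≤ C * (v - C / 2) := by
        nlinarith [mul_nonneg (sub_pos.mpr h).le (show (0:ℝ) ≤ b + C - 2 * v by linarith)]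
      calc (b / wbar) * (v - b / 2) = b * (v - b / 2) / wbar := by ring
        _ ≤ C * (v - C / 2) / wbar := by gcongr
        _ = (C / wbar) * (v - C / 2) := by ring
        _ ≤ π (C * v) := hCA
    · rw [hπ b, if_neg (not_le.mpr (by linarith)), if_neg (not_le.mpr h2)]
      have h0 : 0 ≤ π (C * v) := by rw [hπCv]; positivity
      linarith
end

section
/- Let w be a random variable on [0, w̄] with continuous positive density g and CDF G, let v̄ ∈ (0, w̄), and let b̄_∞ ∈ (v̄, w̄) satisfy E[w | w ≤ b̄_∞] = v̄. Then E[min(b̄_∞, w)] = (1 - G(b̄_∞))·b̄_∞ + G(b̄_∞)·E[w | w ≤ b̄_∞] > v̄. -/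
open MeasureTheory intervalIntegral

theorem limit_revenue_exceeds_vbar (wbar vbar : ℝ) (hv : vbar ∈ Set.Ioo 0 wbar)
    (g : ℝ → ℝ) (hg_cont : ContinuousOn g (Set.Icc 0 wbar))
    (hg_pos : ∀ x ∈ Set.Icc 0 wbar, 0 < g x)
    (hg_zero : ∀ x ∉ Set.Icc 0 wbar, g x = 0)
    (G : ℝ → ℝ) (hG : ∀ b, G b = ∫ x in (0:ℝ)..b, g x)
    (hG_cdf : G wbar = 1)
    (binf : ℝ) (hbinf : binf ∈ Set.Ioo vbar wbar)
    (hmean : (1 / G binf) * ∫ x in (0:ℝ)..binf, x * g x = vbar) :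
    (∫ x in (0:ℝ)..wbar, min binf x * g x) =
        (1 - G binf) * binf + G binf * ((1 / G binf) * ∫ x in (0:ℝ)..binf, x * g x) ∧
      vbar < ∫ x in (0:ℝ)..wbar, min binf x * g x := by
  obtain ⟨h0v, hvw⟩ := hv
  obtain ⟨hvb, hbw⟩ := hbinf
  have h0b : (0:ℝ) < binf := h0v.trans hvb
  have hsub1 : Set.uIcc (0:ℝ) binf ⊆ Set.Icc 0 wbar := by
    rw [Set.uIcc_of_le h0b.le]
    exact Set.Icc_subset_Icc le_rfl hbw.le
  have hsub2 : Set.uIcc binf wbar ⊆ Set.Icc 0 wbar := by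
    rw [Set.uIcc_of_le hbw.le]
    exact Set.Icc_subset_Icc h0b.le le_rfl
  have hsub3 : Set.uIcc (0:ℝ) wbar ⊆ Set.Icc 0 wbar := by
    rw [Set.uIcc_of_le (h0v.trans hvw).le]
  have hgint1 : IntervalIntegrable g volume 0 binf :=
    (hg_cont.mono hsub1).intervalIntegrable
  have hgint2 : IntervalIntegrable g volume binf wbar :=
    (hg_cont.mono hsub2).intervalIntegrable
  have hm_cont : ContinuousOn (fun x => min binf x * g x) (Set.Icc 0 wbar) :=
    ((continuous_const.min continuous_id).continuousOn).mul hg_cont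
  have hmint1 : IntervalIntegrable (fun x => min binf x * g x) volume 0 binf :=
    (hm_cont.mono hsub1).intervalIntegrable
  have hmint2 : IntervalIntegrable (fun x => min binf x * g x) volume binf wbar :=
    (hm_cont.mono hsub2).intervalIntegrable
  have hGpos : 0 < G binf := by
    rw [hG]
    exact intervalIntegral.intervalIntegral_pos_of_pos_on hgint1
      (fun x hx => hg_pos x ⟨hx.1.le, hx.2.le.trans hbw.le⟩) h0b
  have htail : (0:ℝ) < ∫ x in binf..wbar, g x :=
    intervalIntegral.intervalIntegral_pos_of_pos_on hgint2
      (fun x hx => hg_pos x ⟨(h0b.trans hx.1).le, hx.2.le⟩) hbw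
  have hsplitG : G binf + (∫ x in binf..wbar, g x) = 1 := by
    rw [hG, intervalIntegral.integral_add_adjacent_intervals hgint1 hgint2, ← hG]
    exact hG_cdf
  have hGlt : G binf < 1 := by linarith
  -- split main integral
  have hsplit : (∫ x in (0:ℝ)..wbar, min binf x * g x) =
      (∫ x in (0:ℝ)..binf, min binf x * g x) + ∫ x in binf..wbar, min binf x * g x :=
    (intervalIntegral.integral_add_adjacent_intervals hmint1 hmint2).symm
  have h1 : (∫ x in (0:ℝ)..binf, min binf x * g x) = ∫ x in (0:ℝ)..binf, x * g x := by
    apply intervalIntegral.integral_congr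
    intro x hx
    rw [Set.uIcc_of_le h0b.le] at hx
    simp [min_eq_right hx.2]
  have h2 : (∫ x in binf..wbar, min binf x * g x) = binf * ∫ x in binf..wbar, g x := by
    rw [← intervalIntegral.integral_const_mul]
    apply intervalIntegral.integral_congr
    intro x hx
    rw [Set.uIcc_of_le hbw.le] at hx
    simp [min_eq_left hx.1]
  have hmain : (∫ x in (0:ℝ)..wbar, min binf x * g x) =
      (1 - G binf) * binf + ∫ x in (0:ℝ)..binf, x * g x := by
    rw [hsplit, h1, h2]
    have : (∫ x in binf..wbar, g x) = 1 - G binf := by linarith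
    rw [this]; ring
  have heq : (∫ x in (0:ℝ)..wbar, min binf x * g x) =
      (1 - G binf) * binf + G binf * ((1 / G binf) * ∫ x in (0:ℝ)..binf, x * g x) := by
    rw [hmain]
    field_simp
  refine ⟨heq, ?_⟩
  rw [heq, hmean]
  nlinarith [hGpos, hGlt, hvb]
end
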